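/- arXiv:1109.6129 — 2 statements merged into one kernel-verified Lean document; each statement's English description precedes it below -/
import Mathlib

section
/- Let u_i, u_j : ℝ × ℝ → ℝ be measurable, bounded, Lipschitz in the first argument uniformly in the second, T-periodic and zero-average in the second argument. Then there exist constants k₁,…,k₅ ≥ 0 such that for all t₀ ∈ ℝ, t ≥ t₀, ω > 0: |∫_{t₀}^{t} ( ω u_i(τ, ωτ) ∫_{t₀}^{τ} u_j(s, ωs) ds − (1/T) ∫₀^{T} u_i(τ, θ) ∫₀^{θ} u_j(τ, r) dr dθ ) dτ| ≤ k₁(t−t₀)²/ω + k₂(t−t₀)/ω + k₃/ω + k₄/ω² + k₅/ω³. -/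
open intervalIntegral

open MeasureTheory Set

lemma aux_integrable_line (w : ℝ → ℝ → ℝ) {M : ℝ}
    (hmeas : Measurable (Function.uncurry w)) (hbound : ∀ t θ, |w t θ| ≤ M)
    {φ ψ : ℝ → ℝ} (hφ : Measurable φ) (hψ : Measurable ψ) (a b : ℝ) :
    IntervalIntegrable (fun τ => w (φ τ) (ψ τ)) volume a b := by
  have hm : Measurable fun τ => w (φ τ) (ψ τ) := hmeas.comp (hφ.prodMk hψ)
  refine (_root_.intervalIntegrable_const (c := M)).mono_fun' hm.aestronglyMeasurable ?_
  exact Filter.Eventually.of_forall fun x => by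
    simpa [Real.norm_eq_abs] using hbound (φ x) (ψ x)

lemma aux_per_bound {g : ℝ → ℝ} {T c : ℝ} (hT : 0 < T) (hper : Function.Periodic g T)
    (h : ∀ θ ∈ Set.Icc (0:ℝ) T, |g θ| ≤ c) (θ : ℝ) : |g θ| ≤ c := by
  obtain ⟨y, hy, hxy⟩ := hper.exists_mem_Ico₀ hT θ
  rw [hxy]; exact h y ⟨hy.1, hy.2.le⟩

/-- estimate over a single fast period. -/
lemma aux_one_period (w : ℝ → ℝ → ℝ) (M L T : ℝ) (hT : 0 < T)
    (hmeas : Measurable (Function.uncurry w)) (hbound : ∀ t θ, |w t θ| ≤ M)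
    (hlip : ∀ t₁ t₂ θ : ℝ, |w t₁ θ - w t₂ θ| ≤ L * |t₁ - t₂|)
    (hper : ∀ t θ : ℝ, w t (θ + T) = w t θ)
    (hzero : ∀ t : ℝ, (∫ θ in (0:ℝ)..T, w t θ) = 0)
    {ω : ℝ} (hω : 0 < ω) (a : ℝ) :
    |∫ τ in a..(a + T/ω), w τ (ω * τ)| ≤ L * (T/ω)^2 / 2 := by
  have hL : 0 ≤ L := le_trans (abs_nonneg (w 1 0 - w 0 0)) (by simpa using hlip 1 0 0)
  have hh : 0 < T/ω := div_pos hT hω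
  have hint1 : IntervalIntegrable (fun τ => w τ (ω * τ)) volume a (a + T/ω) :=
    aux_integrable_line w hmeas hbound measurable_id (measurable_const.mul measurable_id) _ _
  have hint2 : IntervalIntegrable (fun τ => w a (ω * τ)) volume a (a + T/ω) :=
    aux_integrable_line w hmeas hbound measurable_const (measurable_const.mul measurable_id) _ _
  -- the frozen-time integral vanishes
  have hz : (∫ τ in a..(a + T/ω), w a (ω * τ)) = 0 := by
    have h1 : (∫ τ in a..(a + T/ω), w a (ω * τ)) =
        ω⁻¹ • ∫ θ in ω*a..ω*(a + T/ω), w a θ :=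
      integral_comp_mul_left (fun θ => w a θ) hω.ne'
    have h2 : ω*(a + T/ω) = ω*a + T := by field_simp
    have hper' : Function.Periodic (w a) T := fun θ => hper a θ
    have h3 : (∫ θ in ω*a..ω*a + T, w a θ) = ∫ θ in (0:ℝ)..(0+T), w a θ := by
      simpa using hper'.intervalIntegral_add_eq (ω*a) 0
    rw [h1, h2, h3]
    simp [zero_add, hzero a]
  have hsub : (∫ τ in a..(a + T/ω), w τ (ω * τ)) =
      ∫ τ in a..(a + T/ω), (w τ (ω * τ) - w a (ω * τ)) := by
    rw [integral_sub hint1 hint2, hz, sub_zero]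
  rw [hsub]
  have hg : IntervalIntegrable (fun τ => L * (τ - a)) volume a (a + T/ω) :=
    (continuous_const.mul (continuous_id.sub continuous_const)).intervalIntegrable _ _
  have hb : ∀ᵐ τ ∂volume.restrict (Set.uIoc a (a + T/ω)),
      ‖w τ (ω * τ) - w a (ω * τ)‖ ≤ L * (τ - a) := by
    filter_upwards [ae_restrict_mem measurableSet_uIoc] with τ hτ
    rw [Set.uIoc_of_le (by linarith)] at hτ
    have := hlip τ a (ω * τ)
    rw [Real.norm_eq_abs]
    calc |w τ (ω * τ) - w a (ω * τ)| ≤ L * |τ - a| := hlip τ a (ω * τ)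
      _ = L * (τ - a) := by rw [abs_of_nonneg (by linarith [hτ.1.le])]
  calc ‖∫ τ in a..(a + T/ω), (w τ (ω * τ) - w a (ω * τ))‖
      ≤ |∫ τ in a..(a + T/ω), L * (τ - a)| := le_trans (intervalIntegral.norm_integral_le_of_norm_le (by linarith)
        (by have := (ae_restrict_iff' measurableSet_uIoc).1 hb; rwa [Set.uIoc_of_le (by linarith)] at this) hg)
        (le_abs_self _)
    _ = L * (T/ω)^2 / 2 := by
        rw [intervalIntegral.integral_const_mul]
        have : (∫ τ in a..(a + T/ω), (τ - a)) = (T/ω)^2/2 := by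
          rw [integral_sub intervalIntegrable_id (_root_.intervalIntegrable_const),
            integral_id]
          simp
          ring
        rw [this, abs_of_nonneg (by positivity)]
        ring

/-- First-order averaging estimate. -/
lemma aux_avg1 (w : ℝ → ℝ → ℝ) (M L T : ℝ) (hT : 0 < T)
    (hmeas : Measurable (Function.uncurry w)) (hbound : ∀ t θ, |w t θ| ≤ M)
    (hlip : ∀ t₁ t₂ θ : ℝ, |w t₁ θ - w t₂ θ| ≤ L * |t₁ - t₂|)
    (hper : ∀ t θ : ℝ, w t (θ + T) = w t θ)
    (hzero : ∀ t : ℝ, (∫ θ in (0:ℝ)..T, w t θ) = 0)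
    {ω : ℝ} (hω : 0 < ω) (t₀ t : ℝ) (ht : t₀ ≤ t) :
    |∫ τ in t₀..t, w τ (ω * τ)| ≤ L * T * (t - t₀) / (2*ω) + M * T / ω := by
  have hL : 0 ≤ L := le_trans (abs_nonneg (w 1 0 - w 0 0)) (by simpa using hlip 1 0 0)
  have hM : 0 ≤ M := le_trans (abs_nonneg (w 0 0)) (hbound 0 0)
  have hh : 0 < T/ω := div_pos hT hω
  have hint : ∀ a b : ℝ, IntervalIntegrable (fun τ => w τ (ω * τ)) volume a b :=
    fun a b => aux_integrable_line w hmeas hbound measurable_id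
      (measurable_const.mul measurable_id) a b
  have key : ∀ n : ℕ, ∀ a : ℝ, a ≤ t → t - a ≤ n * (T/ω) →
      |∫ τ in a..t, w τ (ω * τ)| ≤ L * (T/ω) * (t - a) / 2 + M * (T/ω) := by
    intro n
    induction n with
    | zero =>
      intro a ha hle
      have : a = t := le_antisymm ha (by simpa using hle)
      subst this
      simp only [integral_same, abs_zero, sub_self, mul_zero, zero_div, zero_add]
      positivity
    | succ n ih =>
      intro a ha hle
      by_cases hc : t - a ≤ T/ω
      · have hb : |∫ τ in a..t, w τ (ω * τ)| ≤ M * |t - a| := by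
          have := intervalIntegral.norm_integral_le_of_norm_le_const
            (C := M) (f := fun τ => w τ (ω * τ)) (a := a) (b := t)
            (fun x _ => by simpa [Real.norm_eq_abs] using hbound x (ω * x))
          simpa [Real.norm_eq_abs] using this
        have h1 : M * |t - a| ≤ M * (T/ω) := by
          apply mul_le_mul_of_nonneg_left _ hM
          rw [abs_of_nonneg (by linarith)]; exact hc
        have h2 : 0 ≤ L * (T/ω) * (t - a) / 2 :=
          div_nonneg (mul_nonneg (mul_nonneg hL hh.le) (by linarith)) (by norm_num)
        linarith
      · push_neg at hc
        have ha' : a + T/ω ≤ t := by linarith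
        have hsplit : (∫ τ in a..t, w τ (ω * τ)) =
            (∫ τ in a..(a + T/ω), w τ (ω * τ)) + ∫ τ in (a + T/ω)..t, w τ (ω * τ) :=
          (integral_add_adjacent_intervals (hint a (a + T/ω)) (hint (a + T/ω) t)).symm
        have h1 := aux_one_period w M L T hT hmeas hbound hlip hper hzero hω a
        have h2 := ih (a + T/ω) ha' (by push_cast at hle ⊢; linarith)
        calc |∫ τ in a..t, w τ (ω * τ)|
            ≤ |∫ τ in a..(a + T/ω), w τ (ω * τ)| + |∫ τ in (a + T/ω)..t, w τ (ω * τ)| := by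
              rw [hsplit]; exact abs_add_le _ _
          _ ≤ L * (T/ω)^2 / 2 + (L * (T/ω) * (t - (a + T/ω)) / 2 + M * (T/ω)) := by linarith
          _ = L * (T/ω) * (t - a) / 2 + M * (T/ω) := by ring
  obtain ⟨n, hn⟩ := exists_nat_ge ((t - t₀) / (T/ω))
  have hfin := key n t₀ ht (by rw [div_le_iff₀ hh] at hn; linarith)
  calc |∫ τ in t₀..t, w τ (ω * τ)| ≤ L * (T/ω) * (t - t₀) / 2 + M * (T/ω) := hfin
    _ = L * T * (t - t₀) / (2*ω) + M * T / ω := by field_simp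

set_option maxHeartbeats 1600000 in
/-- The main quantitative second-order averaging estimate with explicit constants. -/
lemma aux_main (ui uj : ℝ → ℝ → ℝ) (Mi Mj Li Lj T : ℝ) (hT : 0 < T)
    (hmeasi : Measurable (Function.uncurry ui)) (hmeasj : Measurable (Function.uncurry uj))
    (hboundi : ∀ t θ : ℝ, |ui t θ| ≤ Mi) (hboundj : ∀ t θ : ℝ, |uj t θ| ≤ Mj)
    (hlipi : ∀ t₁ t₂ θ : ℝ, |ui t₁ θ - ui t₂ θ| ≤ Li * |t₁ - t₂|)
    (hlipj : ∀ t₁ t₂ θ : ℝ, |uj t₁ θ - uj t₂ θ| ≤ Lj * |t₁ - t₂|)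
    (hperi : ∀ t θ : ℝ, ui t (θ + T) = ui t θ)
    (hperj : ∀ t θ : ℝ, uj t (θ + T) = uj t θ)
    (hzeroi : ∀ t : ℝ, (∫ τ in (0:ℝ)..T, ui t τ) = 0)
    (hzeroj : ∀ t : ℝ, (∫ τ in (0:ℝ)..T, uj t τ) = 0)
    (t₀ t ω : ℝ) (ht : t₀ ≤ t) (hω : 0 < ω) :
    |∫ τ in t₀..t,
        (ω * ui τ (ω * τ) * (∫ s in t₀..τ, uj s (ω * s)) -
          (1 / T) * ∫ θ in (0:ℝ)..T, ui τ θ * ∫ r in (0:ℝ)..θ, uj τ r)| ≤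
      (Li*Lj*T^2/4) * (t - t₀)^2 / ω + (5/2*Mi*Lj*T^2 + 3*Li*Mj*T^2) * (t - t₀) / ω
        + (6*Mi*Mj*T^2) / ω := by
  have hLi : 0 ≤ Li := le_trans (abs_nonneg _) (by simpa using hlipi 1 0 0)
  have hLj : 0 ≤ Lj := le_trans (abs_nonneg _) (by simpa using hlipj 1 0 0)
  have hMi : 0 ≤ Mi := le_trans (abs_nonneg _) (hboundi 0 0)
  have hMj : 0 ≤ Mj := le_trans (abs_nonneg _) (hboundj 0 0)
  have hh : 0 < T/ω := div_pos hT hω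
  obtain ⟨V, hVdef⟩ : ∃ V : ℝ → ℝ → ℝ, V = fun s θ => ∫ r in (0:ℝ)..θ, uj s r := ⟨_, rfl⟩
  have hIj : ∀ (c a b : ℝ), IntervalIntegrable (fun r => uj c r) volume a b :=
    fun c a b => aux_integrable_line uj hmeasj hboundj measurable_const measurable_id a b
  have hIi : ∀ (c a b : ℝ), IntervalIntegrable (fun r => ui c r) volume a b :=
    fun c a b => aux_integrable_line ui hmeasi hboundi measurable_const measurable_id a b
  -- periodicity of V in the fast variable
  have hVper : ∀ s : ℝ, Function.Periodic (V s) T := by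
    intro s θ
    have h1 : V s (θ + T) - V s θ = ∫ r in θ..(θ+T), uj s r := by
      rw [hVdef]; exact integral_interval_sub_left (hIj s 0 (θ+T)) (hIj s 0 θ)
    have hpj : Function.Periodic (uj s) T := fun x => hperj s x
    have h2 : (∫ r in θ..(θ+T), uj s r) = ∫ r in (0:ℝ)..(0+T), uj s r :=
      hpj.intervalIntegral_add_eq θ 0
    have h3 : (∫ r in (0:ℝ)..(0+T), uj s r) = 0 := by simpa using hzeroj s
    have h4 := h1.trans (h2.trans h3)
    linarith [h4]
  -- global bound on V
  have hVbnd : ∀ s θ, |V s θ| ≤ Mj * T := by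
    intro s θ
    refine aux_per_bound hT (hVper s) (fun θ' hθ' => ?_) θ
    have h := intervalIntegral.norm_integral_le_of_norm_le_const (C := Mj)
      (f := fun r => uj s r) (a := 0) (b := θ')
      (fun x _ => by simpa [Real.norm_eq_abs] using hboundj s x)
    rw [Real.norm_eq_abs] at h
    rw [hVdef]
    calc |∫ r in (0:ℝ)..θ', uj s r| ≤ Mj * |θ' - 0| := h
      _ ≤ Mj * T := by
          rw [sub_zero, abs_of_nonneg hθ'.1]
          exact mul_le_mul_of_nonneg_left hθ'.2 hMj
  -- Lipschitz continuity of V in the slow variable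
  have hVlip : ∀ s₁ s₂ θ, |V s₁ θ - V s₂ θ| ≤ Lj * T * |s₁ - s₂| := by
    intro s₁ s₂ θ
    have hper' : Function.Periodic (fun x => V s₁ x - V s₂ x) T := fun x => by
      simp only [hVper s₁ x, hVper s₂ x]
    refine aux_per_bound hT hper' (fun θ' hθ' => ?_) θ
    have hsub : V s₁ θ' - V s₂ θ' = ∫ r in (0:ℝ)..θ', (uj s₁ r - uj s₂ r) := by
      rw [hVdef]; exact (integral_sub (hIj s₁ 0 θ') (hIj s₂ 0 θ')).symm
    have h := intervalIntegral.norm_integral_le_of_norm_le_const (C := Lj * |s₁ - s₂|)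
      (f := fun r => uj s₁ r - uj s₂ r) (a := 0) (b := θ')
      (fun x _ => by simpa [Real.norm_eq_abs] using hlipj s₁ s₂ x)
    rw [Real.norm_eq_abs] at h
    calc |V s₁ θ' - V s₂ θ'| = |∫ r in (0:ℝ)..θ', (uj s₁ r - uj s₂ r)| := by rw [hsub]
      _ ≤ Lj * |s₁ - s₂| * |θ' - 0| := h
      _ ≤ Lj * T * |s₁ - s₂| := by
          rw [sub_zero, abs_of_nonneg hθ'.1]
          have := mul_le_mul_of_nonneg_left hθ'.2 (mul_nonneg hLj (abs_nonneg (s₁ - s₂)))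
          nlinarith [this]
  -- Lipschitz continuity of V in the fast variable
  have hVlip2 : ∀ s θ₁ θ₂, |V s θ₁ - V s θ₂| ≤ Mj * |θ₁ - θ₂| := by
    intro s θ₁ θ₂
    have hsub : V s θ₁ - V s θ₂ = ∫ r in θ₂..θ₁, uj s r := by
      rw [hVdef]; exact integral_interval_sub_left (hIj s 0 θ₁) (hIj s 0 θ₂)
    rw [hsub]
    have h := intervalIntegral.norm_integral_le_of_norm_le_const (C := Mj)
      (f := fun r => uj s r) (a := θ₂) (b := θ₁)
      (fun x _ => by simpa [Real.norm_eq_abs] using hboundj s x)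
    rw [Real.norm_eq_abs] at h
    simpa [abs_sub_comm] using h
  -- joint continuity of V
  have hVcont : Continuous (Function.uncurry V) := by
    have key : ∀ p q : ℝ × ℝ, dist (Function.uncurry V p) (Function.uncurry V q) ≤
        (Lj*T + Mj) * dist p q := by
      intro p q
      rw [Real.dist_eq, Prod.dist_eq]
      have h1 : |V p.1 p.2 - V q.1 q.2| ≤ |V p.1 p.2 - V q.1 p.2| + |V q.1 p.2 - V q.1 q.2| :=
        abs_sub_le _ _ _
      have h2 := hVlip p.1 q.1 p.2
      have h3 := hVlip2 q.1 p.2 q.2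
      have hd1 : |p.1 - q.1| ≤ max (dist p.1 q.1) (dist p.2 q.2) := by
        rw [Real.dist_eq]; exact le_max_left _ _
      have hd2 : |p.2 - q.2| ≤ max (dist p.1 q.1) (dist p.2 q.2) := by
        rw [Real.dist_eq, Real.dist_eq]; exact le_max_right _ _
      have hm : (0:ℝ) ≤ max (dist p.1 q.1) (dist p.2 q.2) :=
        le_trans dist_nonneg (le_max_left _ _)
      have e1 : Lj * T * |p.1 - q.1| ≤ Lj * T * max (dist p.1 q.1) (dist p.2 q.2) :=
        mul_le_mul_of_nonneg_left hd1 (by positivity)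
      have e2 : Mj * |p.2 - q.2| ≤ Mj * max (dist p.1 q.1) (dist p.2 q.2) :=
        mul_le_mul_of_nonneg_left hd2 hMj
      show |V p.1 p.2 - V q.1 q.2| ≤ _
      nlinarith [h1, h2, h3, e1, e2]
    exact (LipschitzWith.of_dist_le' key).continuous
  have hVdcont : Continuous fun τ => V τ (ω * τ) :=
    hVcont.comp (continuous_id.prodMk (continuous_const.mul continuous_id))
  -- the averaged quantity A
  obtain ⟨A, hAdef⟩ : ∃ A : ℝ → ℝ, A = fun s => ∫ θ in (0:ℝ)..T, ui s θ * V s θ := ⟨_, rfl⟩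
  have hIuiV : ∀ (s a b : ℝ), IntervalIntegrable (fun θ => ui s θ * V s θ) volume a b :=
    fun s a b => (hIi s a b).mul_continuousOn
      ((hVcont.comp (continuous_const.prodMk continuous_id)).continuousOn)
  have hAbnd : ∀ s, |A s| ≤ Mi * (Mj * T) * T := by
    intro s
    have h := intervalIntegral.norm_integral_le_of_norm_le_const (C := Mi * (Mj * T))
      (f := fun θ => ui s θ * V s θ) (a := 0) (b := T)
      (fun x _ => by
        rw [Real.norm_eq_abs, abs_mul]
        exact mul_le_mul (hboundi s x) (hVbnd s x) (abs_nonneg _) hMi)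
    rw [Real.norm_eq_abs] at h
    rw [hAdef]
    calc |∫ θ in (0:ℝ)..T, ui s θ * V s θ| ≤ Mi * (Mj * T) * |T - 0| := h
      _ = Mi * (Mj * T) * T := by rw [sub_zero, abs_of_pos hT]
  have hpt : ∀ s₁ s₂ θ, |ui s₁ θ * V s₁ θ - ui s₂ θ * V s₂ θ|
      ≤ (Li*(Mj*T) + Mi*(Lj*T)) * |s₁ - s₂| := by
    intro s₁ s₂ θ
    have e : ui s₁ θ * V s₁ θ - ui s₂ θ * V s₂ θ
        = (ui s₁ θ - ui s₂ θ) * V s₁ θ + ui s₂ θ * (V s₁ θ - V s₂ θ) := by ring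
    rw [e]
    calc |(ui s₁ θ - ui s₂ θ) * V s₁ θ + ui s₂ θ * (V s₁ θ - V s₂ θ)|
        ≤ |(ui s₁ θ - ui s₂ θ) * V s₁ θ| + |ui s₂ θ * (V s₁ θ - V s₂ θ)| := abs_add_le _ _
      _ = |ui s₁ θ - ui s₂ θ| * |V s₁ θ| + |ui s₂ θ| * |V s₁ θ - V s₂ θ| := by
          rw [abs_mul, abs_mul]
      _ ≤ (Li * |s₁ - s₂|) * (Mj * T) + Mi * (Lj * T * |s₁ - s₂|) := by
          refine add_le_add (mul_le_mul (hlipi s₁ s₂ θ) (hVbnd s₁ θ) (abs_nonneg _)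
            (by positivity)) (mul_le_mul (hboundi s₂ θ) (hVlip s₁ s₂ θ) (abs_nonneg _) hMi)
      _ = (Li*(Mj*T) + Mi*(Lj*T)) * |s₁ - s₂| := by ring
  have hAlip : ∀ s₁ s₂, |A s₁ - A s₂| ≤ ((Li*(Mj*T) + Mi*(Lj*T)) * |s₁ - s₂|) * T := by
    intro s₁ s₂
    have hsub : A s₁ - A s₂ = ∫ θ in (0:ℝ)..T, (ui s₁ θ * V s₁ θ - ui s₂ θ * V s₂ θ) := by
      rw [hAdef]; exact (integral_sub (hIuiV s₁ 0 T) (hIuiV s₂ 0 T)).symm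
    rw [hsub]
    have h := intervalIntegral.norm_integral_le_of_norm_le_const
      (C := (Li*(Mj*T) + Mi*(Lj*T)) * |s₁ - s₂|)
      (f := fun θ => ui s₁ θ * V s₁ θ - ui s₂ θ * V s₂ θ) (a := 0) (b := T)
      (fun x _ => by rw [Real.norm_eq_abs]; exact hpt s₁ s₂ x)
    rw [Real.norm_eq_abs] at h
    calc |∫ θ in (0:ℝ)..T, (ui s₁ θ * V s₁ θ - ui s₂ θ * V s₂ θ)|
        ≤ (Li*(Mj*T) + Mi*(Lj*T)) * |s₁ - s₂| * |T - 0| := h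
      _ = (Li*(Mj*T) + Mi*(Lj*T)) * |s₁ - s₂| * T := by rw [sub_zero, abs_of_pos hT]
  have hAcont : Continuous A := by
    have key : ∀ x y : ℝ, dist (A x) (A y) ≤ ((Li*(Mj*T) + Mi*(Lj*T)) * T) * dist x y := by
      intro x y
      rw [Real.dist_eq, Real.dist_eq]
      calc |A x - A y| ≤ ((Li*(Mj*T) + Mi*(Lj*T)) * |x - y|) * T := hAlip x y
        _ = ((Li*(Mj*T) + Mi*(Lj*T)) * T) * |x - y| := by ring
    exact (LipschitzWith.of_dist_le' key).continuous
  -- the oscillating zero-mean function W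
  obtain ⟨W, hWdef⟩ : ∃ W : ℝ → ℝ → ℝ,
      W = fun s θ => ui s θ * V s θ - (1/T) * A s := ⟨_, rfl⟩
  have hWmeas : Measurable (Function.uncurry W) := by
    have h : Measurable fun p : ℝ × ℝ => Function.uncurry ui p * Function.uncurry V p
        - (1/T) * A p.1 :=
      (hmeasi.mul hVcont.measurable).sub ((hAcont.measurable.comp measurable_fst).const_mul (1/T))
    rw [hWdef]
    exact h
  have hWbnd : ∀ s θ, |W s θ| ≤ 2*(Mi*Mj*T) := by
    intro s θ
    have h1 : |ui s θ * V s θ| ≤ Mi * (Mj*T) := by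
      rw [abs_mul]; exact mul_le_mul (hboundi s θ) (hVbnd s θ) (abs_nonneg _) hMi
    have h2 : |(1/T) * A s| ≤ Mi * (Mj * T) := by
      rw [abs_mul, abs_of_nonneg (by positivity : (0:ℝ) ≤ 1/T)]
      calc (1/T) * |A s| ≤ (1/T) * (Mi*(Mj*T)*T) :=
            mul_le_mul_of_nonneg_left (hAbnd s) (by positivity)
        _ = Mi * (Mj*T) := by field_simp
    have h3 : |W s θ| ≤ |ui s θ * V s θ| + |(1/T) * A s| := by
      rw [hWdef]; exact abs_sub _ _
    have h4 : Mi * (Mj*T) + Mi * (Mj*T) = 2*(Mi*Mj*T) := by ring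
    linarith
  have hWlip : ∀ s₁ s₂ θ, |W s₁ θ - W s₂ θ| ≤ (2*(Li*Mj*T + Mi*Lj*T)) * |s₁ - s₂| := by
    intro s₁ s₂ θ
    have e : W s₁ θ - W s₂ θ
        = (ui s₁ θ * V s₁ θ - ui s₂ θ * V s₂ θ) - (1/T) * (A s₁ - A s₂) := by
      rw [hWdef]; ring
    have h2 : |(1/T) * (A s₁ - A s₂)| ≤ (Li*(Mj*T) + Mi*(Lj*T)) * |s₁ - s₂| := by
      rw [abs_mul, abs_of_nonneg (by positivity : (0:ℝ) ≤ 1/T)]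
      calc (1/T) * |A s₁ - A s₂| ≤ (1/T) * ((Li*(Mj*T) + Mi*(Lj*T)) * |s₁ - s₂| * T) :=
            mul_le_mul_of_nonneg_left (hAlip s₁ s₂) (by positivity)
        _ = (Li*(Mj*T) + Mi*(Lj*T)) * |s₁ - s₂| := by field_simp
    have h3 : |W s₁ θ - W s₂ θ| ≤ |ui s₁ θ * V s₁ θ - ui s₂ θ * V s₂ θ|
        + |(1/T) * (A s₁ - A s₂)| := by rw [e]; exact abs_sub _ _
    have h4 := hpt s₁ s₂ θ
    have h5 : (Li*(Mj*T) + Mi*(Lj*T)) * |s₁ - s₂| + (Li*(Mj*T) + Mi*(Lj*T)) * |s₁ - s₂|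
        = (2*(Li*Mj*T + Mi*Lj*T)) * |s₁ - s₂| := by ring
    linarith
  have hWper : ∀ s θ, W s (θ + T) = W s θ := by
    intro s θ
    rw [hWdef]
    simp only
    rw [hperi s θ, hVper s θ]
  have hWzero : ∀ s, (∫ θ in (0:ℝ)..T, W s θ) = 0 := by
    intro s
    have h1 : (∫ θ in (0:ℝ)..T, W s θ)
        = (∫ θ in (0:ℝ)..T, ui s θ * V s θ) - ∫ θ in (0:ℝ)..T, (1/T) * A s := by
      rw [hWdef]
      exact integral_sub (hIuiV s 0 T) (_root_.intervalIntegrable_const)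
    have h2 : (∫ θ in (0:ℝ)..T, ui s θ * V s θ) = A s := by rw [hAdef]
    rw [h1, h2, intervalIntegral.integral_const, smul_eq_mul]
    field_simp
    ring
  -- primitive F and the remainder R
  have hIdiagj : ∀ a b : ℝ, IntervalIntegrable (fun s => uj s (ω * s)) volume a b :=
    fun a b => aux_integrable_line uj hmeasj hboundj measurable_id
      (measurable_const.mul measurable_id) a b
  have hIdiagi : ∀ a b : ℝ, IntervalIntegrable (fun s => ui s (ω * s)) volume a b :=
    fun a b => aux_integrable_line ui hmeasi hboundi measurable_id
      (measurable_const.mul measurable_id) a b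
  obtain ⟨F, hFdef⟩ : ∃ F : ℝ → ℝ, F = fun τ => ∫ s in t₀..τ, uj s (ω * s) := ⟨_, rfl⟩
  have hFcont : Continuous F := by
    rw [hFdef]; exact intervalIntegral.continuous_primitive hIdiagj t₀
  obtain ⟨R, hRdef⟩ : ∃ R : ℝ → ℝ,
      R = fun τ => F τ - (V τ (ω * τ) - V t₀ (ω * t₀)) / ω := ⟨_, rfl⟩
  have hRcont : Continuous R := by
    rw [hRdef]; exact hFcont.sub ((hVdcont.sub continuous_const).div_const ω)
  have hD0 : 0 ≤ t - t₀ := sub_nonneg.2 ht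
  obtain ⟨ρ, hρdef⟩ : ∃ ρ : ℝ, ρ = (Lj*T*(t - t₀)/2 + 3*(Mj*T)) / ω := ⟨_, rfl⟩
  have hρ0 : 0 ≤ ρ := by rw [hρdef]; positivity
  have hFbnd : ∀ τ, t₀ ≤ τ → τ ≤ t → |F τ| ≤ Lj*T*(t - t₀)/(2*ω) + Mj*T/ω := by
    intro τ h1 h2
    have h := aux_avg1 uj Mj Lj T hT hmeasj hboundj hlipj hperj hzeroj hω t₀ τ h1
    rw [hFdef]
    refine le_trans h ?_
    have h3 : Lj*T*(τ - t₀)/(2*ω) ≤ Lj*T*(t - t₀)/(2*ω) :=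
      (div_le_div_iff_of_pos_right (by positivity : (0:ℝ) < 2*ω)).mpr
        (mul_le_mul_of_nonneg_left (by linarith) (mul_nonneg hLj hT.le))
    linarith
  have hRbnd : ∀ τ, t₀ ≤ τ → τ ≤ t → |R τ| ≤ ρ := by
    intro τ h1 h2
    have hF := hFbnd τ h1 h2
    have hVv : |(V τ (ω*τ) - V t₀ (ω*t₀))/ω| ≤ 2*(Mj*T)/ω := by
      rw [abs_div, abs_of_pos hω]
      apply (div_le_div_iff_of_pos_right hω).mpr
      calc |V τ (ω*τ) - V t₀ (ω*t₀)| ≤ |V τ (ω*τ)| + |V t₀ (ω*t₀)| := abs_sub _ _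
        _ ≤ Mj*T + Mj*T := add_le_add (hVbnd _ _) (hVbnd _ _)
        _ = 2*(Mj*T) := by ring
    have h3 : |R τ| ≤ |F τ| + |(V τ (ω*τ) - V t₀ (ω*t₀))/ω| := by
      rw [hRdef]; exact abs_sub _ _
    have h4 : Lj*T*(t - t₀)/(2*ω) + Mj*T/ω + 2*(Mj*T)/ω = ρ := by
      rw [hρdef]; field_simp; ring
    linarith
  -- the increment of R over a short interval
  have hVid : ∀ a τ : ℝ, (∫ s in a..τ, uj a (ω * s)) = (V a (ω*τ) - V a (ω*a)) / ω := by
    intro a τ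
    rw [integral_comp_mul_left (fun θ => uj a θ) hω.ne']
    have h1 : (∫ θ in ω*a..ω*τ, uj a θ) = V a (ω*τ) - V a (ω*a) := by
      rw [hVdef]
      exact (integral_interval_sub_left (hIj a 0 (ω*τ)) (hIj a 0 (ω*a))).symm
    rw [h1, smul_eq_mul]
    ring
  have hRdiff : ∀ a τ : ℝ, a ≤ τ → τ - a ≤ T/ω →
      |R τ - R a| ≤ (2*Lj*T/ω) * (τ - a) := by
    intro a τ h1 h2
    have hFd : F τ - F a = ∫ s in a..τ, uj s (ω * s) := by
      rw [hFdef]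
      exact integral_interval_sub_left (hIdiagj t₀ τ) (hIdiagj t₀ a)
    have hRe : R τ - R a = (∫ s in a..τ, (uj s (ω*s) - uj a (ω*s)))
        - (V τ (ω*τ) - V a (ω*τ))/ω := by
      have hsplit : (∫ s in a..τ, (uj s (ω*s) - uj a (ω*s)))
          = (∫ s in a..τ, uj s (ω*s)) - ∫ s in a..τ, uj a (ω*s) :=
        integral_sub (hIdiagj a τ) (aux_integrable_line uj hmeasj hboundj measurable_const
          (measurable_const.mul measurable_id) a τ)
      rw [hsplit, hVid a τ, ← hFd, hRdef]
      simp only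
      field_simp
      ring
    have hb1 : |∫ s in a..τ, (uj s (ω*s) - uj a (ω*s))| ≤ (Lj*(τ-a)) * (τ-a) := by
      have h := intervalIntegral.norm_integral_le_of_norm_le_const (C := Lj*(τ-a))
        (f := fun s => uj s (ω*s) - uj a (ω*s)) (a := a) (b := τ)
        (fun x hx => by
          rw [Set.uIoc_of_le h1] at hx
          rw [Real.norm_eq_abs]
          calc |uj x (ω*x) - uj a (ω*x)| ≤ Lj * |x - a| := hlipj x a (ω*x)
            _ ≤ Lj * (τ - a) := by
                rw [abs_of_nonneg (by linarith [hx.1])]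
                exact mul_le_mul_of_nonneg_left (by linarith [hx.2]) hLj)
      rw [Real.norm_eq_abs, abs_of_nonneg (by linarith : (0:ℝ) ≤ τ - a)] at h
      exact h
    have hb2 : |(V τ (ω*τ) - V a (ω*τ))/ω| ≤ Lj*T*(τ-a)/ω := by
      rw [abs_div, abs_of_pos hω]
      apply (div_le_div_iff_of_pos_right hω).mpr
      calc |V τ (ω*τ) - V a (ω*τ)| ≤ Lj * T * |τ - a| := hVlip τ a (ω*τ)
        _ = Lj*T*(τ-a) := by rw [abs_of_nonneg (by linarith)]
    have h3 : |R τ - R a| ≤ (Lj*(τ-a))*(τ-a) + Lj*T*(τ-a)/ω := by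
      rw [hRe]
      exact le_trans (abs_sub _ _) (add_le_add hb1 hb2)
    have hkey : Lj*(τ-a)*(τ-a) ≤ Lj*T/ω*(τ-a) := by
      have hn : 0 ≤ Lj*(τ-a) := mul_nonneg hLj (by linarith)
      calc Lj*(τ-a)*(τ-a) = (Lj*(τ-a))*(τ-a) := by ring
        _ ≤ (Lj*(τ-a))*(T/ω) := mul_le_mul_of_nonneg_left h2 hn
        _ = Lj*T/ω*(τ-a) := by ring
    have he : Lj*T/ω*(τ-a) + Lj*T*(τ-a)/ω = (2*Lj*T/ω) * (τ - a) := by ring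
    linarith
  obtain ⟨C1, hC1def⟩ : ∃ C1 : ℝ, C1 = Mi*Lj*T^3/ω^2 + ρ*Li*T^2/(2*ω) := ⟨_, rfl⟩
  have hC1nn : 0 ≤ C1 := by rw [hC1def]; positivity
  have hIint : ∀ a b : ℝ, IntervalIntegrable (fun τ => ω * ui τ (ω*τ) * R τ) volume a b :=
    fun a b => ((hIdiagi a b).const_mul ω).mul_continuousOn hRcont.continuousOn
  have perS : ∀ a, t₀ ≤ a → a + T/ω ≤ t →
      |∫ τ in a..a+T/ω, ω * ui τ (ω*τ) * R τ| ≤ C1 := by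
    intro a ha hat
    have hint1 : IntervalIntegrable (fun τ => ω * ui τ (ω*τ) * (R τ - R a)) volume a (a+T/ω) :=
      ((hIdiagi _ _).const_mul ω).mul_continuousOn ((hRcont.sub continuous_const).continuousOn)
    have hint2 : IntervalIntegrable (fun τ => (ω * R a) * ui τ (ω*τ)) volume a (a+T/ω) :=
      (hIdiagi _ _).const_mul _
    have heq : (∫ τ in a..a+T/ω, ω * ui τ (ω*τ) * R τ)
        = (∫ τ in a..a+T/ω, ω * ui τ (ω*τ) * (R τ - R a))
          + ∫ τ in a..a+T/ω, (ω * R a) * ui τ (ω*τ) := by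
      rw [← integral_add hint1 hint2]
      exact integral_congr fun τ _ => by ring
    have hb1 : |∫ τ in a..a+T/ω, ω * ui τ (ω*τ) * (R τ - R a)| ≤ Mi*Lj*T^3/ω^2 := by
      have hg : IntervalIntegrable (fun τ => (ω*Mi*(2*Lj*T/ω)) * (τ - a)) volume a (a+T/ω) :=
        (continuous_const.mul (continuous_id.sub continuous_const)).intervalIntegrable _ _
      have hae : ∀ᵐ τ ∂volume.restrict (Set.uIoc a (a+T/ω)),
          ‖ω * ui τ (ω*τ) * (R τ - R a)‖ ≤ (ω*Mi*(2*Lj*T/ω)) * (τ - a) := by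
        filter_upwards [ae_restrict_mem measurableSet_uIoc] with τ hτ
        rw [Set.uIoc_of_le (by linarith)] at hτ
        obtain ⟨hτ1, hτ2⟩ := hτ
        rw [Real.norm_eq_abs, abs_mul, abs_mul, abs_of_pos hω]
        have h1 := hRdiff a τ hτ1.le (by linarith)
        have h2 := hboundi τ (ω*τ)
        calc ω * |ui τ (ω*τ)| * |R τ - R a| ≤ (ω * Mi) * ((2*Lj*T/ω)*(τ - a)) := by
              refine mul_le_mul (mul_le_mul_of_nonneg_left h2 hω.le) h1 (abs_nonneg _)
                (by positivity)
          _ = (ω*Mi*(2*Lj*T/ω)) * (τ - a) := by ring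
      calc |∫ τ in a..a+T/ω, ω * ui τ (ω*τ) * (R τ - R a)|
          ≤ |∫ τ in a..a+T/ω, (ω*Mi*(2*Lj*T/ω)) * (τ - a)| :=
            le_trans (intervalIntegral.norm_integral_le_of_norm_le (by linarith)
              (by have := (ae_restrict_iff' measurableSet_uIoc).1 hae; rwa [Set.uIoc_of_le (by linarith)] at this) hg)
              (le_abs_self _)
        _ = Mi*Lj*T^3/ω^2 := by
            rw [intervalIntegral.integral_const_mul]
            have hid : (∫ τ in a..(a + T/ω), (τ - a)) = (T/ω)^2/2 := by
              rw [integral_sub intervalIntegrable_id (_root_.intervalIntegrable_const),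
                integral_id]
              simp
              ring
            rw [hid, abs_mul, abs_of_nonneg (by positivity : (0:ℝ) ≤ ω*Mi*(2*Lj*T/ω)),
              abs_of_nonneg (by positivity : (0:ℝ) ≤ (T/ω)^2/2)]
            field_simp
    have hb2 : |∫ τ in a..a+T/ω, (ω * R a) * ui τ (ω*τ)| ≤ ρ*Li*T^2/(2*ω) := by
      rw [intervalIntegral.integral_const_mul, abs_mul, abs_mul, abs_of_pos hω]
      have h1 := aux_one_period ui Mi Li T hT hmeasi hboundi hlipi hperi hzeroi hω a
      have h2 := hRbnd a ha (by linarith)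
      calc ω * |R a| * |∫ τ in a..a+T/ω, ui τ (ω*τ)| ≤ (ω * ρ) * (Li * (T/ω)^2/2) := by
            refine mul_le_mul (mul_le_mul_of_nonneg_left h2 hω.le) h1 (abs_nonneg _)
              (by positivity)
        _ = ρ*Li*T^2/(2*ω) := by field_simp
    calc |∫ τ in a..a+T/ω, ω * ui τ (ω*τ) * R τ|
        ≤ |∫ τ in a..a+T/ω, ω * ui τ (ω*τ) * (R τ - R a)|
          + |∫ τ in a..a+T/ω, (ω * R a) * ui τ (ω*τ)| := by rw [heq]; exact abs_add_le _ _
      _ ≤ C1 := by rw [hC1def]; exact add_le_add hb1 hb2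
  have keyS : ∀ n : ℕ, ∀ a, t₀ ≤ a → a ≤ t → t - a ≤ n * (T/ω) →
      |∫ τ in a..t, ω * ui τ (ω*τ) * R τ| ≤ C1 * (ω*(t-a)/T) + Mi*T*ρ := by
    intro n
    induction n with
    | zero =>
      intro a h1 h2 h3
      have : a = t := le_antisymm h2 (by simpa using h3)
      subst this
      simp only [integral_same, abs_zero, sub_self, mul_zero, zero_div, mul_zero, add_zero,
        zero_add]
      positivity
    | succ n ih =>
      intro a h1 h2 h3
      by_cases hc : t - a ≤ T/ω
      · have hb : |∫ τ in a..t, ω * ui τ (ω*τ) * R τ| ≤ (ω*Mi*ρ) * |t - a| := by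
          have hq := intervalIntegral.norm_integral_le_of_norm_le_const (C := ω*Mi*ρ)
            (f := fun τ => ω * ui τ (ω*τ) * R τ) (a := a) (b := t) (fun x hx => by
              rw [Set.uIoc_of_le h2] at hx
              rw [Real.norm_eq_abs, abs_mul, abs_mul, abs_of_pos hω]
              have hR := hRbnd x (by linarith [hx.1]) hx.2
              exact mul_le_mul (mul_le_mul_of_nonneg_left (hboundi x (ω*x)) hω.le) hR
                (abs_nonneg _) (by positivity))
          simpa [Real.norm_eq_abs] using hq
        have hc2 : (ω*Mi*ρ) * |t - a| ≤ Mi*T*ρ := by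
          rw [abs_of_nonneg (by linarith)]
          calc (ω*Mi*ρ) * (t - a) ≤ (ω*Mi*ρ) * (T/ω) :=
              mul_le_mul_of_nonneg_left hc (by positivity)
            _ = Mi*T*ρ := by field_simp
        have hc3 : 0 ≤ C1 * (ω*(t-a)/T) := by
          apply mul_nonneg hC1nn
          have : 0 ≤ t - a := by linarith
          positivity
        linarith
      · push_neg at hc
        have ha' : a + T/ω ≤ t := by linarith
        have hsplit : (∫ τ in a..t, ω * ui τ (ω*τ) * R τ)
            = (∫ τ in a..(a + T/ω), ω * ui τ (ω*τ) * R τ)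
              + ∫ τ in (a + T/ω)..t, ω * ui τ (ω*τ) * R τ :=
          (integral_add_adjacent_intervals (hIint a (a + T/ω)) (hIint (a + T/ω) t)).symm
        have hp := perS a h1 ha'
        have hih := ih (a + T/ω) (by linarith) ha' (by push_cast at h3 ⊢; linarith)
        calc |∫ τ in a..t, ω * ui τ (ω*τ) * R τ|
            ≤ |∫ τ in a..(a + T/ω), ω * ui τ (ω*τ) * R τ|
              + |∫ τ in (a + T/ω)..t, ω * ui τ (ω*τ) * R τ| := by
              rw [hsplit]; exact abs_add_le _ _
          _ ≤ C1 + (C1 * (ω*(t-(a + T/ω))/T) + Mi*T*ρ) := add_le_add hp hih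
          _ = C1 * (ω*(t-a)/T) + Mi*T*ρ := by field_simp; ring
  have hS : |∫ τ in t₀..t, ω * ui τ (ω*τ) * R τ| ≤ C1 * (ω*(t-t₀)/T) + Mi*T*ρ := by
    obtain ⟨n, hn⟩ := exists_nat_ge ((t - t₀)/(T/ω))
    exact keyS n t₀ le_rfl ht (by rw [div_le_iff₀ hh] at hn; linarith)
  -- first-order estimates for W and ui
  have hWest : |∫ τ in t₀..t, W τ (ω*τ)|
      ≤ (2*(Li*Mj*T + Mi*Lj*T)) * T * (t - t₀) / (2*ω) + (2*(Mi*Mj*T)) * T / ω :=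
    aux_avg1 W (2*(Mi*Mj*T)) (2*(Li*Mj*T + Mi*Lj*T)) T hT hWmeas hWbnd hWlip hWper hWzero
      hω t₀ t ht
  have hUest : |∫ τ in t₀..t, ui τ (ω*τ)| ≤ Li*T*(t - t₀)/(2*ω) + Mi*T/ω :=
    aux_avg1 ui Mi Li T hT hmeasi hboundi hlipi hperi hzeroi hω t₀ t ht
  have hthird : |∫ τ in t₀..t, (-(V t₀ (ω*t₀))) * ui τ (ω*τ)|
      ≤ Mj*T * (Li*T*(t - t₀)/(2*ω) + Mi*T/ω) := by
    rw [intervalIntegral.integral_const_mul, abs_mul, abs_neg]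
    exact mul_le_mul (hVbnd t₀ (ω*t₀)) hUest (abs_nonneg _) (by positivity)
  -- assemble everything
  have hIW : ∀ a b : ℝ, IntervalIntegrable (fun τ => W τ (ω*τ)) volume a b :=
    fun a b => aux_integrable_line W hWmeas hWbnd measurable_id
      (measurable_const.mul measurable_id) a b
  have heq2 : (∫ τ in t₀..t,
        (ω * ui τ (ω * τ) * (∫ s in t₀..τ, uj s (ω * s)) -
          (1 / T) * ∫ θ in (0:ℝ)..T, ui τ θ * ∫ r in (0:ℝ)..θ, uj τ r))
      = (∫ τ in t₀..t, ω * ui τ (ω*τ) * R τ) + ((∫ τ in t₀..t, W τ (ω*τ))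
        + ∫ τ in t₀..t, (-(V t₀ (ω*t₀))) * ui τ (ω*τ)) := by
    rw [← integral_add (hIW t₀ t) ((hIdiagi t₀ t).const_mul _),
      ← integral_add (hIint t₀ t) ((hIW t₀ t).add ((hIdiagi t₀ t).const_mul _))]
    refine integral_congr fun τ _ => ?_
    have hFτ : (∫ s in t₀..τ, uj s (ω * s)) = F τ := by rw [hFdef]
    have hAτ : (∫ θ in (0:ℝ)..T, ui τ θ * ∫ r in (0:ℝ)..θ, uj τ r) = A τ := by
      rw [hAdef]; simp only [hVdef]
    simp only [hFτ, hAτ, hRdef, hWdef]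
    field_simp
    ring
  rw [heq2]
  have habs : |(∫ τ in t₀..t, ω * ui τ (ω*τ) * R τ) + ((∫ τ in t₀..t, W τ (ω*τ))
        + ∫ τ in t₀..t, (-(V t₀ (ω*t₀))) * ui τ (ω*τ))|
      ≤ (C1 * (ω*(t-t₀)/T) + Mi*T*ρ)
        + (((2*(Li*Mj*T + Mi*Lj*T)) * T * (t - t₀) / (2*ω) + (2*(Mi*Mj*T)) * T / ω)
          + Mj*T * (Li*T*(t - t₀)/(2*ω) + Mi*T/ω)) :=
    le_trans (abs_add_le _ _) (add_le_add hS (le_trans (abs_add_le _ _) (add_le_add hWest hthird)))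
  refine le_trans habs (le_of_eq ?_)
  rw [hC1def, hρdef]
  field_simp
  ring
/-- Lemma 4 of the paper: second-order averaging estimate. -/
theorem averaging_estimate_second_order (ui uj : ℝ → ℝ → ℝ) (Mi Mj Li Lj T : ℝ) (hT : 0 < T)
    (hmeasi : Measurable (Function.uncurry ui)) (hmeasj : Measurable (Function.uncurry uj))
    (hboundi : ∀ t θ : ℝ, |ui t θ| ≤ Mi) (hboundj : ∀ t θ : ℝ, |uj t θ| ≤ Mj)
    (hlipi : ∀ t₁ t₂ θ : ℝ, |ui t₁ θ - ui t₂ θ| ≤ Li * |t₁ - t₂|)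
    (hlipj : ∀ t₁ t₂ θ : ℝ, |uj t₁ θ - uj t₂ θ| ≤ Lj * |t₁ - t₂|)
    (hperi : ∀ t θ : ℝ, ui t (θ + T) = ui t θ)
    (hperj : ∀ t θ : ℝ, uj t (θ + T) = uj t θ)
    (hzeroi : ∀ t : ℝ, (∫ τ in (0:ℝ)..T, ui t τ) = 0)
    (hzeroj : ∀ t : ℝ, (∫ τ in (0:ℝ)..T, uj t τ) = 0) :
    ∃ k₁ k₂ k₃ k₄ k₅ : ℝ, 0 ≤ k₁ ∧ 0 ≤ k₂ ∧ 0 ≤ k₃ ∧ 0 ≤ k₄ ∧ 0 ≤ k₅ ∧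
      ∀ t₀ t ω : ℝ, t₀ ≤ t → 0 < ω →
        |∫ τ in t₀..t,
            (ω * ui τ (ω * τ) * (∫ s in t₀..τ, uj s (ω * s)) -
              (1 / T) * ∫ θ in (0:ℝ)..T, ui τ θ * ∫ r in (0:ℝ)..θ, uj τ r)| ≤
          k₁ * (t - t₀) ^ 2 / ω + k₂ * (t - t₀) / ω + k₃ / ω + k₄ / ω ^ 2 + k₅ / ω ^ 3 := by
  have hLi : 0 ≤ Li := le_trans (abs_nonneg _) (by simpa using hlipi 1 0 0)
  have hLj : 0 ≤ Lj := le_trans (abs_nonneg _) (by simpa using hlipj 1 0 0)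
  have hMi : 0 ≤ Mi := le_trans (abs_nonneg _) (hboundi 0 0)
  have hMj : 0 ≤ Mj := le_trans (abs_nonneg _) (hboundj 0 0)
  refine ⟨Li*Lj*T^2/4, 5/2*Mi*Lj*T^2 + 3*Li*Mj*T^2, 6*Mi*Mj*T^2, 0, 0,
    by positivity, by positivity, by positivity, le_rfl, le_rfl, ?_⟩
  intro t₀ t ω ht hω
  have h := aux_main ui uj Mi Mj Li Lj T hT hmeasi hmeasj hboundi hboundj hlipi hlipj
    hperi hperj hzeroi hzeroj t₀ t ω ht hω
  refine le_trans h (le_of_eq ?_)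
  ring
end

section
/- Let f : ℝ → ℝ be continuously differentiable with bounded derivative and consider the ODE ẋ = α√ω cos(ωt) + f(x)√ω sin(ωt) with absolutely continuous solution x on [t₀, t]. Then x(t) = x(t₀) + (√ω/ω) r(ωt, x) + ∫_{t₀}^{t} b(ωs, x(s)) ds, where r(ωt, x) = −f(x(t))cos(ωt) + f(x(t₀))cos(ωt₀) + α(sin(ωt) − sin(ωt₀)) and b(ωs, x(s)) = α f'(x(s)) cos²(ωs) + f'(x(s)) f(x(s)) sin(ωs) cos(ωs). -/
open Real intervalIntegral

/-- integral representation of the basic extremum seeking ODE after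
integration by parts. -/
theorem extremum_seeking_integral_representation
    (f : ℝ → ℝ) (hf : ContDiff ℝ 1 f) (hf' : ∃ C : ℝ, ∀ y : ℝ, |deriv f y| ≤ C)
    (α ω t₀ t₁ : ℝ) (hω : 0 < ω) (hα : 0 < α) (ht : t₀ ≤ t₁)
    (x : ℝ → ℝ) (hx : ContinuousOn x (Set.Icc t₀ t₁))
    (hode : ∀ t ∈ Set.Icc t₀ t₁,
      HasDerivAt x (α * Real.sqrt ω * Real.cos (ω * t) +
        f (x t) * Real.sqrt ω * Real.sin (ω * t)) t) :
    x t₁ = x t₀ +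
      (Real.sqrt ω / ω) *
        (-(f (x t₁) * Real.cos (ω * t₁)) + f (x t₀) * Real.cos (ω * t₀) +
          α * (Real.sin (ω * t₁) - Real.sin (ω * t₀))) +
      ∫ s in t₀..t₁,
        (α * deriv f (x s) * Real.cos (ω * s) ^ 2 +
          deriv f (x s) * f (x s) * Real.sin (ω * s) * Real.cos (ω * s)) := by
  set G : ℝ → ℝ := fun s => x s + (Real.sqrt ω / ω) * (f (x s) * Real.cos (ω * s))
      - (Real.sqrt ω / ω) * α * Real.sin (ω * s) with hG
  have hsq : Real.sqrt ω * Real.sqrt ω = ω := Real.mul_self_sqrt hω.le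
  have hdf : Differentiable ℝ f := hf.differentiable one_ne_zero
  have hGderiv : ∀ s ∈ Set.uIcc t₀ t₁,
      HasDerivAt G (α * deriv f (x s) * Real.cos (ω * s) ^ 2 +
        deriv f (x s) * f (x s) * Real.sin (ω * s) * Real.cos (ω * s)) s := by
    intro s hs
    rw [Set.uIcc_of_le ht] at hs
    have hx' := hode s hs
    have hlin : HasDerivAt (fun s : ℝ => ω * s) ω s := by
      simpa using (hasDerivAt_id s).const_mul ω
    have hcos : HasDerivAt (fun s => Real.cos (ω * s)) (-Real.sin (ω * s) * ω) s :=
      (Real.hasDerivAt_cos (ω * s)).comp s hlin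
    have hsin : HasDerivAt (fun s => Real.sin (ω * s)) (Real.cos (ω * s) * ω) s :=
      (Real.hasDerivAt_sin (ω * s)).comp s hlin
    have hfx : HasDerivAt (fun s => f (x s))
        (deriv f (x s) * (α * Real.sqrt ω * Real.cos (ω * s) +
          f (x s) * Real.sqrt ω * Real.sin (ω * s))) s :=
      ((hdf (x s)).hasDerivAt).comp s hx'
    have h := (hx'.add (((hfx.mul hcos).const_mul (Real.sqrt ω / ω)))).sub
      ((hsin.const_mul ((Real.sqrt ω / ω) * α)))
    refine h.congr_deriv (Eq.symm ?_)
    field_simp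
    linear_combination (-1 : ℝ) * (α * deriv f (x s) * Real.cos (ω * s) ^ 2 +
      deriv f (x s) * f (x s) * Real.sin (ω * s) * Real.cos (ω * s)) * hsq
  have hcont : ContinuousOn (fun s => α * deriv f (x s) * Real.cos (ω * s) ^ 2 +
      deriv f (x s) * f (x s) * Real.sin (ω * s) * Real.cos (ω * s)) (Set.uIcc t₀ t₁) := by
    rw [Set.uIcc_of_le ht]
    have hdf' : Continuous (deriv f) := hf.continuous_deriv le_rfl
    exact ((continuousOn_const.mul (hdf'.comp_continuousOn hx)).mul
        ((Real.continuous_cos.comp (continuous_const.mul continuous_id)).continuousOn.pow 2)).add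
      ((((hdf'.comp_continuousOn hx).mul (hf.continuous.comp_continuousOn hx)).mul
        ((Real.continuous_sin.comp (continuous_const.mul continuous_id)).continuousOn)).mul
        ((Real.continuous_cos.comp (continuous_const.mul continuous_id)).continuousOn))
  have hint := intervalIntegral.integral_eq_sub_of_hasDerivAt hGderiv hcont.intervalIntegrable
  rw [hint]
  simp only [hG]
  ring
end
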